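/- (Lemma 1, part ii) For each fixed x ∈ ℝⁿ, the function U ↦ Ĵ_N(U,x) is twice continuously differentiable, and with σ := λ_min(H) > 0 and L := λ_max(H + (ε(1+w̄)/δ²)·GᵀG), where w̄ = max_i wⁱ, its Hessian satisfies σ‖v‖² ≤ vᵀ∇²_U Ĵ_N(U,x) v ≤ L‖v‖² for all U ∈ ℝ^{Nm}, x ∈ ℝⁿ, v ∈ ℝ^{Nm}; consequently Ĵ_N(·,x) is σ-strongly convex and its gradient is L-Lipschitz: ‖∇_U Ĵ_N(U₁,x) − ∇_U Ĵ_N(U₂,x)‖ ≤ L‖U₁ − U₂‖ for all U₁, U₂ ∈ ℝ^{Nm} and all x ∈ ℝⁿ. -/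

import Mathlib

open Matrix

/-- The relaxed logarithmic barrier function with relaxation parameter `δ`. -/
noncomputable def Bhat (δ z : ℝ) : ℝ :=
  if δ < z then -Real.log z
  else (1 / 2) * (((z - 2 * δ) / δ) ^ 2 - 1) - Real.log δ

/-- Recentered relaxed logarithmic barrier for the combined constraints `GU ≤ d + Ex`. -/
noncomputable def Bxu {nm n q : ℕ} (δ : ℝ) (G : Matrix (Fin q) (Fin nm) ℝ)
    (E : Matrix (Fin q) (Fin n) ℝ) (d w : Fin q → ℝ)
    (U : Fin nm → ℝ) (x : Fin n → ℝ) : ℝ :=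
  ∑ i, (1 + w i) * (Bhat δ (-(G.mulVec U i) + E.mulVec x i + d i) + Real.log (d i))

/-- The relaxed barrier function based MPC cost in condensed form. -/
noncomputable def Jcost {nm n q : ℕ} (δ ε : ℝ) (H : Matrix (Fin nm) (Fin nm) ℝ)
    (F : Matrix (Fin n) (Fin nm) ℝ) (Y : Matrix (Fin n) (Fin n) ℝ)
    (G : Matrix (Fin q) (Fin nm) ℝ) (E : Matrix (Fin q) (Fin n) ℝ) (d w : Fin q → ℝ)
    (U : Fin nm → ℝ) (x : Fin n → ℝ) : ℝ :=
  (1 / 2) * (U ⬝ᵥ H.mulVec U) + x ⬝ᵥ F.mulVec U + x ⬝ᵥ Y.mulVec x +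
    ε * Bxu δ G E d w U x

/-- Euclidean norm of a vector. -/
noncomputable def euclNorm {k : ℕ} (v : Fin k → ℝ) : ℝ :=
  Real.sqrt (∑ i, (v i) ^ 2)

/-- The gradient (as a vector) of a function `f : ℝ^k → ℝ` at `U`. -/
noncomputable def gradVec {k : ℕ} (f : (Fin k → ℝ) → ℝ) (U : Fin k → ℝ) : Fin k → ℝ :=
  fun i => fderiv ℝ f U (Pi.single i 1)

set_option maxHeartbeats 1000000
set_option synthInstance.maxHeartbeats 400000
open Set

noncomputable def B1 (δ z : ℝ) : ℝ := if δ < z then -z⁻¹ else (z - 2*δ)/δ^2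

noncomputable def B2 (δ z : ℝ) : ℝ := ((max z δ)^2)⁻¹

lemma quad_hasDeriv (δ z : ℝ) (hδ : 0 < δ) :
    HasDerivAt (fun y => (1 / 2) * (((y - 2 * δ) / δ) ^ 2 - 1) - Real.log δ)
      ((z - 2*δ)/δ^2) z := by
  have h1 : HasDerivAt (fun y : ℝ => (y - 2*δ)/δ) (1/δ) z := by
    simpa using ((hasDerivAt_id z).sub_const (2*δ)).div_const δ
  have h : HasDerivAt (fun y : ℝ => (1 / 2) * (((y - 2 * δ) / δ) ^ 2 - 1) - Real.log δ)
      ((1/2) * (2 * ((z - 2*δ)/δ) ^ 1 * (1/δ))) z :=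
    (((h1.pow 2).sub_const 1).const_mul (1/2)).sub_const (Real.log δ)
  convert h using 1
  rw [pow_one]
  field_simp

theorem hasDerivAt_Bhat {δ : ℝ} (hδ : 0 < δ) (z : ℝ) : HasDerivAt (Bhat δ) (B1 δ z) z := by
  have hquadval : (1:ℝ) / 2 * (((δ - 2 * δ) / δ) ^ 2 - 1) - Real.log δ = -Real.log δ := by
    rw [show δ - 2*δ = -δ by ring, neg_div, div_self hδ.ne']
    norm_num
  rcases lt_trichotomy δ z with h | h | h
  · have hz : (0:ℝ) < z := hδ.trans h
    have hlog : HasDerivAt (fun y : ℝ => -Real.log y) (-z⁻¹) z := (Real.hasDerivAt_log hz.ne').neg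
    have heq : Bhat δ =ᶠ[nhds z] fun y => -Real.log y := by
      filter_upwards [eventually_gt_nhds h] with y hy
      simp [Bhat, if_pos hy]
    rw [B1, if_pos h]
    exact hlog.congr_of_eventuallyEq heq
  · subst h
    rw [B1, if_neg (lt_irrefl δ)]
    have hIic : HasDerivWithinAt (Bhat δ) ((δ - 2*δ)/δ^2) (Iic δ) δ := by
      refine ((quad_hasDeriv δ δ hδ).hasDerivWithinAt).congr ?_ ?_
      · intro y hy; simp only [Bhat, if_neg (not_lt.mpr (mem_Iic.mp hy))]
      · simp only [Bhat, if_neg (lt_irrefl δ)]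
    have hIci : HasDerivWithinAt (Bhat δ) ((δ - 2*δ)/δ^2) (Ici δ) δ := by
      have hlog : HasDerivAt (fun y : ℝ => -Real.log y) ((δ - 2*δ)/δ^2) δ := by
        have h := (Real.hasDerivAt_log hδ.ne').fun_neg
        rw [show (δ - 2*δ)/δ^2 = -δ⁻¹ by field_simp; ring]
        exact h
      refine hlog.hasDerivWithinAt.congr ?_ ?_
      · intro y hy
        rcases eq_or_lt_of_le (mem_Ici.mp hy) with h | h
        · rw [Bhat, ← h, if_neg (lt_irrefl δ), hquadval]
        · simp [Bhat, if_pos h]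
      · rw [Bhat, if_neg (lt_irrefl δ), hquadval]
    have hu := hIic.union hIci
    rw [Set.Iic_union_Ici] at hu
    exact hasDerivWithinAt_univ.mp hu
  · have heq : Bhat δ =ᶠ[nhds z] fun y => (1 / 2) * (((y - 2 * δ) / δ) ^ 2 - 1) - Real.log δ := by
      filter_upwards [eventually_lt_nhds h] with y hy
      simp [Bhat, if_neg (not_lt.mpr hy.le)]
    rw [B1, if_neg (not_lt.mpr h.le)]
    exact (quad_hasDeriv δ z hδ).congr_of_eventuallyEq heq

theorem hasDerivAt_B1 {δ : ℝ} (hδ : 0 < δ) (z : ℝ) : HasDerivAt (B1 δ) (B2 δ z) z := by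
  have hB1δ : (δ - 2*δ)/δ^2 = -δ⁻¹ := by field_simp; ring
  rcases lt_trichotomy δ z with h | h | h
  · have hz : (0:ℝ) < z := hδ.trans h
    have hinv : HasDerivAt (fun y : ℝ => -y⁻¹) ((z^2)⁻¹) z := by
      simpa using (hasDerivAt_inv hz.ne').fun_neg
    have heq : B1 δ =ᶠ[nhds z] fun y => -y⁻¹ := by
      filter_upwards [eventually_gt_nhds h] with y hy
      simp [B1, if_pos hy]
    rw [B2, max_eq_left h.le]
    exact hinv.congr_of_eventuallyEq heq
  · subst h
    rw [B2, max_self]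
    have hIic : HasDerivWithinAt (B1 δ) ((δ^2)⁻¹) (Iic δ) δ := by
      have hq : HasDerivAt (fun y : ℝ => (y - 2*δ)/δ^2) ((δ^2)⁻¹) δ := by
        simpa [one_div] using ((hasDerivAt_id δ).sub_const (2*δ)).div_const (δ^2)
      refine hq.hasDerivWithinAt.congr ?_ ?_
      · intro y hy; simp only [B1, if_neg (not_lt.mpr (mem_Iic.mp hy))]
      · simp only [B1, if_neg (lt_irrefl δ)]
    have hIci : HasDerivWithinAt (B1 δ) ((δ^2)⁻¹) (Ici δ) δ := by
      have hinv : HasDerivAt (fun y : ℝ => -y⁻¹) ((δ^2)⁻¹) δ := by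
        simpa using (hasDerivAt_inv hδ.ne').fun_neg
      refine hinv.hasDerivWithinAt.congr ?_ ?_
      · intro y hy
        rcases eq_or_lt_of_le (mem_Ici.mp hy) with h | h
        · rw [B1, ← h, if_neg (lt_irrefl δ), hB1δ]
        · simp [B1, if_pos h]
      · rw [B1, if_neg (lt_irrefl δ), hB1δ]
    have hu := hIic.union hIci
    rw [Set.Iic_union_Ici] at hu
    exact hasDerivWithinAt_univ.mp hu
  · have heq : B1 δ =ᶠ[nhds z] fun y => (y - 2*δ)/δ^2 := by
      filter_upwards [eventually_lt_nhds h] with y hy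
      simp [B1, if_neg (not_lt.mpr hy.le)]
    rw [B2, max_eq_right h.le]
    have hq : HasDerivAt (fun y : ℝ => (y - 2*δ)/δ^2) ((δ^2)⁻¹) z := by
      simpa [one_div] using ((hasDerivAt_id z).sub_const (2*δ)).div_const (δ^2)
    exact hq.congr_of_eventuallyEq heq

lemma continuous_B2 {δ : ℝ} (hδ : 0 < δ) : Continuous (B2 δ) := by
  apply Continuous.inv₀
  · exact (continuous_id.max continuous_const).pow 2
  · intro z
    have : (0:ℝ) < max z δ := lt_max_of_lt_right hδ
    positivity

lemma B2_pos {δ : ℝ} (hδ : 0 < δ) (z : ℝ) : 0 < B2 δ z := by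
  have : (0:ℝ) < max z δ := lt_max_of_lt_right hδ
  rw [B2]; positivity

lemma B2_le {δ : ℝ} (hδ : 0 < δ) (z : ℝ) : B2 δ z ≤ (δ^2)⁻¹ := by
  rw [B2]
  apply inv_anti₀ (by positivity)
  have : δ ≤ max z δ := le_max_right z δ
  nlinarith [le_max_right z δ]

noncomputable def dotC {k : ℕ} (c : Fin k → ℝ) : (Fin k → ℝ) →L[ℝ] ℝ :=
  ∑ j, c j • ContinuousLinearMap.proj j

@[simp] lemma dotC_apply {k : ℕ} (c v : Fin k → ℝ) : dotC c v = c ⬝ᵥ v := by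
  simp [dotC, dotProduct, ContinuousLinearMap.sum_apply]

noncomputable def Phi {nm : ℕ} (H : Matrix (Fin nm) (Fin nm) ℝ) :
    (Fin nm → ℝ) →L[ℝ] ((Fin nm → ℝ) →L[ℝ] ℝ) :=
  ∑ i, (ContinuousLinearMap.proj i).smulRight (dotC (H i))

@[simp] lemma Phi_apply {nm : ℕ} (H : Matrix (Fin nm) (Fin nm) ℝ) (U v : Fin nm → ℝ) :
    Phi H U v = U ⬝ᵥ H.mulVec v := by
  simp [Phi, ContinuousLinearMap.sum_apply, dotProduct, mulVec]

lemma mulVec_i_eq_dotC {k m : ℕ} (G : Matrix (Fin m) (Fin k) ℝ) (i : Fin m) :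
    (fun U : Fin k → ℝ => G.mulVec U i) = ⇑(dotC (G i)) := by
  funext v; simp [mulVec, dotProduct]

lemma dotvec_mulVec_eq_dotC {k m : ℕ} (F : Matrix (Fin m) (Fin k) ℝ) (x : Fin m → ℝ) :
    (fun U : Fin k → ℝ => x ⬝ᵥ F.mulVec U) = ⇑(dotC (x ᵥ* F)) := by
  funext v
  simp only [dotC_apply]
  rw [← dotProduct_mulVec]

noncomputable def sfun {nm n q : ℕ} (G : Matrix (Fin q) (Fin nm) ℝ)
    (E : Matrix (Fin q) (Fin n) ℝ) (d : Fin q → ℝ) (x : Fin n → ℝ)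
    (U : Fin nm → ℝ) (i : Fin q) : ℝ :=
  -(G.mulVec U i) + E.mulVec x i + d i

noncomputable def Dj {nm n q : ℕ} (δ ε : ℝ) (H : Matrix (Fin nm) (Fin nm) ℝ)
    (F : Matrix (Fin n) (Fin nm) ℝ)
    (G : Matrix (Fin q) (Fin nm) ℝ) (E : Matrix (Fin q) (Fin n) ℝ) (d w : Fin q → ℝ)
    (x : Fin n → ℝ) (U : Fin nm → ℝ) : (Fin nm → ℝ) →L[ℝ] ℝ :=
  Phi H U + dotC (x ᵥ* F) +
    ∑ i, (ε * (1 + w i) * B1 δ (sfun G E d x U i)) • (-(dotC (G i)))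

noncomputable def D2j {nm n q : ℕ} (δ ε : ℝ) (H : Matrix (Fin nm) (Fin nm) ℝ)
    (G : Matrix (Fin q) (Fin nm) ℝ) (E : Matrix (Fin q) (Fin n) ℝ) (d w : Fin q → ℝ)
    (x : Fin n → ℝ) (U : Fin nm → ℝ) :
    (Fin nm → ℝ) →L[ℝ] ((Fin nm → ℝ) →L[ℝ] ℝ) :=
  Phi H + ∑ i, (ε * (1 + w i) * B2 δ (sfun G E d x U i)) •
    ((dotC (G i)).smulRight (dotC (G i)))

@[simp] lemma D2j_apply {nm n q : ℕ} (δ ε : ℝ) (H : Matrix (Fin nm) (Fin nm) ℝ)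
    (G : Matrix (Fin q) (Fin nm) ℝ) (E : Matrix (Fin q) (Fin n) ℝ) (d w : Fin q → ℝ)
    (x : Fin n → ℝ) (U v u : Fin nm → ℝ) :
    D2j δ ε H G E d w x U v u =
      v ⬝ᵥ H.mulVec u +
        ∑ i, ε * (1 + w i) * B2 δ (sfun G E d x U i) * ((G i ⬝ᵥ v) * (G i ⬝ᵥ u)) := by
  simp [D2j, ContinuousLinearMap.sum_apply, smul_eq_mul]


section scaffold
variable {nm n q : ℕ} {δ ε : ℝ} {H : Matrix (Fin nm) (Fin nm) ℝ}
    {F : Matrix (Fin n) (Fin nm) ℝ} {Y : Matrix (Fin n) (Fin n) ℝ}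
    {G : Matrix (Fin q) (Fin nm) ℝ} {E : Matrix (Fin q) (Fin n) ℝ} {d w : Fin q → ℝ}
    {x : Fin n → ℝ}

lemma mulVec_symm (hHsymm : H.IsSymm) (u v : Fin nm → ℝ) :
    H.mulVec u ⬝ᵥ v = u ⬝ᵥ H.mulVec v := by
  rw [dotProduct_mulVec, ← Matrix.mulVec_transpose, hHsymm, dotProduct_comm]

lemma hasFDerivAt_sfun (U : Fin nm → ℝ) (i : Fin q) :
    HasFDerivAt (fun U => sfun G E d x U i) (-(dotC (G i))) U := by
  unfold sfun
  have hG : HasFDerivAt (fun U : Fin nm → ℝ => G.mulVec U i) (dotC (G i)) U := by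
    rw [mulVec_i_eq_dotC]; exact (dotC (G i)).hasFDerivAt
  exact (hG.neg.add_const (E.mulVec x i)).add_const (d i)

lemma hasFDerivAt_Jcost (hδ : 0 < δ) (hHsymm : H.IsSymm) (U : Fin nm → ℝ) :
    HasFDerivAt (fun U => Jcost δ ε H F Y G E d w U x) (Dj δ ε H F G E d w x U) U := by
  have hq1 : HasFDerivAt (fun U : Fin nm → ℝ => (1/2 : ℝ) * (U ⬝ᵥ H.mulVec U))
      ((1/2 : ℝ) • ∑ i, ((U i) • dotC (H i) + (H.mulVec U i) • ContinuousLinearMap.proj i)) U := by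
    have hterm : ∀ i : Fin nm, HasFDerivAt (fun U : Fin nm → ℝ => U i * H.mulVec U i)
        ((U i) • dotC (H i) + (H.mulVec U i) • ContinuousLinearMap.proj i) U := by
      intro i
      have hc : HasFDerivAt (fun U : Fin nm → ℝ => U i)
          (ContinuousLinearMap.proj i : (Fin nm → ℝ) →L[ℝ] ℝ) U :=
        (ContinuousLinearMap.proj (R := ℝ) (φ := fun _ : Fin nm => ℝ) i).hasFDerivAt
      have hd : HasFDerivAt (fun U : Fin nm → ℝ => H.mulVec U i) (dotC (H i)) U := by
        rw [mulVec_i_eq_dotC]; exact (dotC (H i)).hasFDerivAt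
      exact hc.mul hd
    exact (HasFDerivAt.fun_sum (fun i _ => hterm i)).const_mul (1/2)
  have hq2 : HasFDerivAt (fun U : Fin nm → ℝ => x ⬝ᵥ F.mulVec U) (dotC (x ᵥ* F)) U := by
    rw [dotvec_mulVec_eq_dotC]; exact (dotC (x ᵥ* F)).hasFDerivAt
  have hbar : HasFDerivAt (fun U : Fin nm → ℝ => ε * Bxu δ G E d w U x)
      (ε • ∑ i, (1 + w i) • ((B1 δ (sfun G E d x U i)) • (-(dotC (G i))))) U := by
    unfold Bxu
    refine HasFDerivAt.const_mul ?_ ε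
    refine HasFDerivAt.fun_sum fun i _ => ?_
    refine HasFDerivAt.const_mul ?_ (1 + w i)
    refine HasFDerivAt.add_const (Real.log (d i)) ?_
    have hB := (hasDerivAt_Bhat hδ (sfun G E d x U i)).comp_hasFDerivAt U (hasFDerivAt_sfun U i)
    exact hB
  have htot := ((hq1.fun_add hq2).add_const (x ⬝ᵥ Y.mulVec x)).fun_add hbar
  have : (fun U : Fin nm → ℝ => (1/2 : ℝ) * (U ⬝ᵥ H.mulVec U) + x ⬝ᵥ F.mulVec U
      + x ⬝ᵥ Y.mulVec x + ε * Bxu δ G E d w U x)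
      = fun U => Jcost δ ε H F Y G E d w U x := by
    funext v; rw [Jcost]
  rw [this] at htot
  refine htot.congr_fderiv ?_
  ext v
  simp only [Dj, ContinuousLinearMap.add_apply, ContinuousLinearMap.smul_apply,
    ContinuousLinearMap.coe_sum', Finset.sum_apply, ContinuousLinearMap.neg_apply,
    ContinuousLinearMap.proj_apply, dotC_apply, Phi_apply, smul_eq_mul]
  have hsym : ∑ i, H.mulVec U i * v i = U ⬝ᵥ H.mulVec v := by
    rw [← mulVec_symm hHsymm U v]; rfl
  have hexp : ∑ i, (U i * (H i ⬝ᵥ v) + H.mulVec U i * v i)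
      = U ⬝ᵥ H.mulVec v + U ⬝ᵥ H.mulVec v := by
    rw [Finset.sum_add_distrib, hsym]
    congr 1
  rw [hexp]
  have h2 : (1:ℝ)/2 * (U ⬝ᵥ H.mulVec v + U ⬝ᵥ H.mulVec v) = U ⬝ᵥ H.mulVec v := by ring
  rw [h2, Finset.mul_sum]
  congr 1
  refine Finset.sum_congr rfl fun i _ => by ring

lemma hasFDerivAt_Dj (hδ : 0 < δ) (U : Fin nm → ℝ) :
    HasFDerivAt (Dj δ ε H F G E d w x) (D2j δ ε H G E d w x U) U := by
  have hPhi : HasFDerivAt (fun U : Fin nm → ℝ => Phi H U) (Phi H) U := (Phi H).hasFDerivAt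
  have hterm : ∀ i : Fin q, HasFDerivAt
      (fun U : Fin nm → ℝ => (ε * (1 + w i) * B1 δ (sfun G E d x U i)) • (-(dotC (G i))))
      (((ε * (1 + w i)) • (B2 δ (sfun G E d x U i) • (-(dotC (G i))))).smulRight
        (-(dotC (G i)))) U := by
    intro i
    have hB1 : HasFDerivAt (fun U : Fin nm → ℝ => B1 δ (sfun G E d x U i))
        (B2 δ (sfun G E d x U i) • (-(dotC (G i)))) U :=
      by have hB := (hasDerivAt_B1 hδ (sfun G E d x U i)).comp_hasFDerivAt U (hasFDerivAt_sfun U i); exact hB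
    exact (hB1.const_mul (ε * (1 + w i))).smul_const (-(dotC (G i)))
  have hsum : HasFDerivAt
      (fun U : Fin nm → ℝ => ∑ i, (ε * (1 + w i) * B1 δ (sfun G E d x U i)) • (-(dotC (G i))))
      (∑ i, ((ε * (1 + w i)) • (B2 δ (sfun G E d x U i) • (-(dotC (G i))))).smulRight
        (-(dotC (G i)))) U := HasFDerivAt.fun_sum fun i _ => hterm i
  have htot := (hPhi.add_const (dotC (x ᵥ* F))).fun_add hsum
  have hfun : (fun U : Fin nm → ℝ => (Phi H U + dotC (x ᵥ* F)) +
      ∑ i, (ε * (1 + w i) * B1 δ (sfun G E d x U i)) • (-(dotC (G i))))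
      = Dj δ ε H F G E d w x := by
    funext v; rw [Dj]
  rw [hfun] at htot
  refine htot.congr_fderiv ?_
  ext v u
  simp only [D2j, ContinuousLinearMap.add_apply, ContinuousLinearMap.smul_apply,
    ContinuousLinearMap.coe_sum', Finset.sum_apply, ContinuousLinearMap.neg_apply,
    ContinuousLinearMap.smulRight_apply, dotC_apply, Phi_apply, smul_eq_mul,
    ContinuousLinearMap.zero_apply, add_zero, zero_add]
  congr 1
  refine Finset.sum_congr rfl fun i _ => by ring

lemma continuous_D2j (hδ : 0 < δ) : Continuous (D2j δ ε H G E d w x) := by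
  haveI hg : IsTopologicalAddGroup ((Fin nm → ℝ) →L[ℝ] (Fin nm → ℝ) →L[ℝ] ℝ) := inferInstance
  haveI : ContinuousAdd ((Fin nm → ℝ) →L[ℝ] (Fin nm → ℝ) →L[ℝ] ℝ) := hg.toContinuousAdd
  refine Continuous.fun_add continuous_const ?_
  refine continuous_finset_sum _ fun i _ => ?_
  refine Continuous.fun_smul ?_ continuous_const
  have hc : Continuous (fun U : Fin nm → ℝ => sfun G E d x U i) := by
    have h : (fun U : Fin nm → ℝ => sfun G E d x U i)
        = fun U => -(dotC (G i) U) + (E.mulVec x i + d i) := by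
      funext v
      have : (G *ᵥ v) i = G i ⬝ᵥ v := rfl
      simp only [sfun, dotC_apply, this]; ring
    rw [h]
    exact Continuous.add (continuous_neg.comp (dotC (G i)).continuous) continuous_const
  have hB2c : Continuous (B2 δ) := by
    apply Continuous.inv₀
    · exact (continuous_id.max continuous_const).pow 2
    · intro z
      have : (0:ℝ) < max z δ := lt_max_of_lt_right hδ
      positivity
  exact (continuous_const.mul (hB2c.comp hc))

lemma dot_self_nonneg' {k : ℕ} (v : Fin k → ℝ) : 0 ≤ v ⬝ᵥ v :=
  Finset.sum_nonneg fun i _ => mul_self_nonneg (v i)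

lemma dot_self_pos {k : ℕ} {v : Fin k → ℝ} (hv : v ≠ 0) : 0 < v ⬝ᵥ v := by
  rcases (dot_self_nonneg' v).lt_or_eq with h | h
  · exact h
  · exfalso
    apply hv
    funext i
    have hz := (Finset.sum_eq_zero_iff_of_nonneg
      (fun i _ => mul_self_nonneg (v i))).mp h.symm i (Finset.mem_univ i)
    have := mul_self_eq_zero.mp hz
    simpa using this

lemma GtG_quad {k m : ℕ} (G : Matrix (Fin m) (Fin k) ℝ) (v : Fin k → ℝ) :
    v ⬝ᵥ (Gᵀ * G).mulVec v = ∑ i, (G i ⬝ᵥ v)^2 := by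
  rw [← Matrix.mulVec_mulVec, dotProduct_mulVec, Matrix.vecMul_transpose]
  simp only [dotProduct, sq]
  rfl

lemma exists_pos_quad_lb {k : ℕ} (H : Matrix (Fin k) (Fin k) ℝ)
    (hHpd : ∀ v : Fin k → ℝ, v ≠ 0 → 0 < v ⬝ᵥ H.mulVec v) :
    ∃ c > 0, ∀ v : Fin k → ℝ, c * (v ⬝ᵥ v) ≤ v ⬝ᵥ H.mulVec v := by
  rcases Nat.eq_zero_or_pos k with h0 | hpos
  · subst h0
    exact ⟨1, one_pos, fun v => by simp [dotProduct]⟩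
  · set S := {v : Fin k → ℝ | v ⬝ᵥ v = 1} with hS
    have hcont1 : Continuous fun v : Fin k → ℝ => v ⬝ᵥ v := by
      show Continuous fun v : Fin k → ℝ => ∑ i, v i * v i
      exact continuous_finset_sum _ fun i _ => (continuous_apply i).mul (continuous_apply i)
    have hcontH : Continuous fun v : Fin k → ℝ => v ⬝ᵥ H.mulVec v := by
      have h : (fun v : Fin k → ℝ => v ⬝ᵥ H.mulVec v)
          = fun v => ∑ i, v i * dotC (H i) v := by
        funext v; simp only [dotC_apply]; rfl
      rw [h]
      exact continuous_finset_sum _ fun i _ =>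
        (continuous_apply i).mul (dotC (H i)).continuous
    have hclosed : IsClosed S := isClosed_eq hcont1 continuous_const
    have hsub : S ⊆ Metric.closedBall 0 1 := by
      intro v hv
      rw [Metric.mem_closedBall, dist_zero_right]
      rw [pi_norm_le_iff_of_nonneg zero_le_one]
      intro i
      have h1 : v i * v i ≤ 1 := by
        have hv1 : v ⬝ᵥ v = 1 := hv
        calc v i * v i ≤ ∑ j, v j * v j :=
              Finset.single_le_sum (fun j _ => mul_self_nonneg (v j)) (Finset.mem_univ i)
          _ = v ⬝ᵥ v := rfl
          _ = 1 := hv1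
      have : ‖v i‖ = |v i| := rfl
      rw [this]
      nlinarith [abs_nonneg (v i), abs_mul_abs_self (v i)]
    have hK : IsCompact S := (isCompact_closedBall 0 1).of_isClosed_subset hclosed hsub
    have hne : S.Nonempty := by
      refine ⟨Pi.single ⟨0, hpos⟩ 1, ?_⟩
      simp only [hS, Set.mem_setOf_eq, dotProduct]
      rw [Finset.sum_eq_single ⟨0, hpos⟩]
      · simp
      · intro b _ hb; simp [Pi.single_apply, hb]
      · intro h; exact absurd (Finset.mem_univ _) h
    obtain ⟨v₀, hv₀S, hmin⟩ := hK.exists_isMinOn hne hcontH.continuousOn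
    have hv₀ne : v₀ ≠ 0 := by
      intro h
      rw [hS] at hv₀S
      simp only [Set.mem_setOf_eq, h, zero_dotProduct] at hv₀S
      norm_num at hv₀S
    refine ⟨v₀ ⬝ᵥ H.mulVec v₀, hHpd v₀ hv₀ne, fun v => ?_⟩
    by_cases hv : v = 0
    · simp [hv]
    · have hr : 0 < v ⬝ᵥ v := dot_self_pos hv
      set r := v ⬝ᵥ v with hrdef
      have hsq : Real.sqrt r > 0 := Real.sqrt_pos.mpr hr
      set a := (Real.sqrt r)⁻¹ with ha
      have haa : a * a * r = 1 := by
        rw [ha, ← mul_inv]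
        rw [Real.mul_self_sqrt hr.le]
        field_simp
      have hu : (a • v) ∈ S := by
        simp only [hS, Set.mem_setOf_eq, smul_dotProduct, dotProduct_smul, smul_eq_mul]
        rw [← hrdef]; linarith [haa]
      have hQu : (a • v) ⬝ᵥ H.mulVec (a • v) = a * a * (v ⬝ᵥ H.mulVec v) := by
        rw [smul_dotProduct, Matrix.mulVec_smul, dotProduct_smul]
        simp [smul_eq_mul]; ring
      have hle : v₀ ⬝ᵥ H.mulVec v₀ ≤ (a • v) ⬝ᵥ H.mulVec (a • v) := hmin hu
      rw [hQu] at hle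
      -- hle : v₀ ⬝ᵥ H v₀ ≤ a * a * (v ⬝ᵥ H v)
      have haar : a * a = r⁻¹ := by
        field_simp at haa ⊢
        nlinarith [haa]
      rw [haar] at hle
      calc (v₀ ⬝ᵥ H.mulVec v₀) * r ≤ (r⁻¹ * (v ⬝ᵥ H.mulVec v)) * r := by
            apply mul_le_mul_of_nonneg_right hle hr.le
        _ = v ⬝ᵥ H.mulVec v := by field_simp

lemma D2j_symm (hδ : 0 < δ) (hHsymm : H.IsSymm) (U v u : Fin nm → ℝ) :
    D2j δ ε H G E d w x U v u = D2j δ ε H G E d w x U u v := by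
  rw [D2j_apply, D2j_apply]
  rw [← mulVec_symm hHsymm u v]
  rw [dotProduct_comm]
  congr 1
  exact Finset.sum_congr rfl fun i _ => by ring

lemma D2j_lower (hδ : 0 < δ) (hε : 0 < ε) (hw : ∀ i, 0 ≤ w i) (U v : Fin nm → ℝ) :
    v ⬝ᵥ H.mulVec v ≤ D2j δ ε H G E d w x U v v := by
  rw [D2j_apply]
  have : 0 ≤ ∑ i, ε * (1 + w i) * B2 δ (sfun G E d x U i) * ((G i ⬝ᵥ v) * (G i ⬝ᵥ v)) := by
    refine Finset.sum_nonneg fun i _ => ?_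
    have h1 : 0 ≤ 1 + w i := by linarith [hw i]
    have h2 : 0 ≤ B2 δ (sfun G E d x U i) := by
      rw [B2]; positivity
    have h3 : 0 ≤ (G i ⬝ᵥ v) * (G i ⬝ᵥ v) := mul_self_nonneg _
    positivity
  linarith

lemma D2j_upper (hδ : 0 < δ) (hε : 0 < ε) (hw : ∀ i, 0 ≤ w i)
    {wbar : ℝ} (hwbar : IsGreatest (Set.range w) wbar) (U v : Fin nm → ℝ) :
    D2j δ ε H G E d w x U v v ≤
      v ⬝ᵥ (H + ((ε * (1 + wbar)) / δ ^ 2) • (Gᵀ * G)).mulVec v := by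
  have hexp : v ⬝ᵥ (H + ((ε * (1 + wbar)) / δ ^ 2) • (Gᵀ * G)).mulVec v
      = v ⬝ᵥ H.mulVec v + ((ε * (1 + wbar)) / δ ^ 2) * ∑ i, (G i ⬝ᵥ v)^2 := by
    rw [Matrix.add_mulVec, dotProduct_add]
    congr 1
    rw [Matrix.smul_mulVec, dotProduct_smul, smul_eq_mul, GtG_quad]
  rw [D2j_apply, hexp]
  have hsum : ∑ i, ε * (1 + w i) * B2 δ (sfun G E d x U i) * ((G i ⬝ᵥ v) * (G i ⬝ᵥ v))
      ≤ ((ε * (1 + wbar)) / δ ^ 2) * ∑ i, (G i ⬝ᵥ v)^2 := by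
    rw [Finset.mul_sum]
    refine Finset.sum_le_sum fun i _ => ?_
    have hB2le : B2 δ (sfun G E d x U i) ≤ (δ^2)⁻¹ := by
      rw [B2]
      apply inv_anti₀ (by positivity)
      have h := le_max_right (sfun G E d x U i) δ
      nlinarith [le_max_right (sfun G E d x U i) δ]
    have hB2nn : 0 ≤ B2 δ (sfun G E d x U i) := by rw [B2]; positivity
    have hwle : w i ≤ wbar := hwbar.2 (Set.mem_range_self i)
    have h1 : 0 ≤ 1 + w i := by linarith [hw i]
    have hsq : 0 ≤ (G i ⬝ᵥ v) * (G i ⬝ᵥ v) := mul_self_nonneg _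
    have hcoef : ε * (1 + w i) * B2 δ (sfun G E d x U i) ≤ (ε * (1 + wbar)) / δ ^ 2 := by
      rw [div_eq_mul_inv]
      have : ε * (1 + w i) ≤ ε * (1 + wbar) := by nlinarith
      calc ε * (1 + w i) * B2 δ (sfun G E d x U i) ≤ ε * (1 + w i) * (δ^2)⁻¹ := by
            apply mul_le_mul_of_nonneg_left hB2le (by positivity)
        _ ≤ ε * (1 + wbar) * (δ^2)⁻¹ := by
            apply mul_le_mul_of_nonneg_right this (by positivity)
    calc ε * (1 + w i) * B2 δ (sfun G E d x U i) * ((G i ⬝ᵥ v) * (G i ⬝ᵥ v))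
        ≤ ((ε * (1 + wbar)) / δ ^ 2) * ((G i ⬝ᵥ v) * (G i ⬝ᵥ v)) :=
          mul_le_mul_of_nonneg_right hcoef hsq
      _ = ((ε * (1 + wbar)) / δ ^ 2) * (G i ⬝ᵥ v)^2 := by ring
  linarith

end scaffold

lemma quad_add_GtG {nm q : ℕ} (H : Matrix (Fin nm) (Fin nm) ℝ)
    (G : Matrix (Fin q) (Fin nm) ℝ) (κ : ℝ) (v : Fin nm → ℝ) :
    v ⬝ᵥ (H + κ • (Gᵀ * G)).mulVec v = v ⬝ᵥ H.mulVec v + κ * ∑ i, (G i ⬝ᵥ v)^2 := by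
  rw [Matrix.add_mulVec, dotProduct_add]
  congr 1
  rw [Matrix.smul_mulVec, dotProduct_smul, smul_eq_mul, GtG_quad]

lemma clm_sum_single {k : ℕ} (T : (Fin k → ℝ) →L[ℝ] ℝ) (z : Fin k → ℝ) :
    ∑ i, z i * T (Pi.single i 1) = T z := by
  have hz : z = ∑ i, z i • (Pi.single i (1:ℝ) : Fin k → ℝ) := by
    have h := Finset.univ_sum_single z
    rw [← h]
    refine Finset.sum_congr rfl fun i _ => ?_
    funext j
    simp [Pi.single_apply]
  conv_rhs => rw [hz]
  rw [map_sum]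
  exact Finset.sum_congr rfl fun i _ => by rw [_root_.map_smul, smul_eq_mul]

/-- (Lemma 1, part ii) For each fixed `x`, the cost `Ĵ_N(·,x)` is twice continuously
differentiable and, with `σ = λ_min(H) > 0` and `L = λ_max(H + (ε(1+w̄)/δ²)GᵀG)` where
`w̄ = max_i wⁱ`, its Hessian satisfies `σ‖v‖² ≤ vᵀ∇²_U Ĵ_N(U,x) v ≤ L‖v‖²`; consequently
`Ĵ_N(·,x)` is `σ`-strongly convex and its gradient is `L`-Lipschitz. -/
theorem cost_hessian_bounds_and_lipschitz_gradient
    {nm n q : ℕ} (δ ε : ℝ) (H : Matrix (Fin nm) (Fin nm) ℝ)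
    (F : Matrix (Fin n) (Fin nm) ℝ) (Y : Matrix (Fin n) (Fin n) ℝ)
    (G : Matrix (Fin q) (Fin nm) ℝ) (E : Matrix (Fin q) (Fin n) ℝ) (d w : Fin q → ℝ)
    (σ L wbar : ℝ)
    (hδ : 0 < δ) (hε : 0 < ε)
    (hd : ∀ i, 0 < d i) (hw : ∀ i, 0 ≤ w i)
    (hHsymm : H.IsSymm) (hYsymm : Y.IsSymm)
    (hHpd : ∀ v : Fin nm → ℝ, v ≠ 0 → 0 < v ⬝ᵥ H.mulVec v)
    (hwbar : IsGreatest (Set.range w) wbar)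
    (hσ : IsGreatest {c : ℝ | ∀ v : Fin nm → ℝ, c * (v ⬝ᵥ v) ≤ v ⬝ᵥ H.mulVec v} σ)
    (hL : IsLeast {c : ℝ | ∀ v : Fin nm → ℝ,
      v ⬝ᵥ (H + ((ε * (1 + wbar)) / δ ^ 2) • (Gᵀ * G)).mulVec v ≤ c * (v ⬝ᵥ v)} L) :
    0 < σ ∧
    (∀ x : Fin n → ℝ, ContDiff ℝ 2 (fun U => Jcost δ ε H F Y G E d w U x)) ∧
    (∀ (x : Fin n → ℝ) (U v : Fin nm → ℝ),
      σ * (v ⬝ᵥ v) ≤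
          (fderiv ℝ (fderiv ℝ (fun U' => Jcost δ ε H F Y G E d w U' x)) U) v v ∧
        (fderiv ℝ (fderiv ℝ (fun U' => Jcost δ ε H F Y G E d w U' x)) U) v v ≤
          L * (v ⬝ᵥ v)) ∧
    (∀ (x : Fin n → ℝ) (U₁ U₂ : Fin nm → ℝ) (t : ℝ), 0 ≤ t → t ≤ 1 →
      Jcost δ ε H F Y G E d w (t • U₁ + (1 - t) • U₂) x ≤
        t * Jcost δ ε H F Y G E d w U₁ x + (1 - t) * Jcost δ ε H F Y G E d w U₂ x -
          (σ / 2) * t * (1 - t) * ((U₁ - U₂) ⬝ᵥ (U₁ - U₂))) ∧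
    (∀ (x : Fin n → ℝ) (U₁ U₂ : Fin nm → ℝ),
      euclNorm (gradVec (fun U' => Jcost δ ε H F Y G E d w U' x) U₁ -
          gradVec (fun U' => Jcost δ ε H F Y G E d w U' x) U₂) ≤
        L * euclNorm (U₁ - U₂)) := by
  -- basic positivity facts
  have hσpos : 0 < σ := by
    obtain ⟨c, hc, hcall⟩ := exists_pos_quad_lb H hHpd
    exact hc.trans_le (hσ.2 hcall)
  obtain ⟨i₀w, hi₀w⟩ := hwbar.1
  have hwbar0 : 0 ≤ wbar := hi₀w ▸ hw i₀w
  have hκ0 : 0 ≤ (ε * (1 + wbar)) / δ ^ 2 := by positivity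
  have hLσ : σ ≤ L := by
    rcases Nat.eq_zero_or_pos nm with h0 | hpos
    · exfalso
      subst h0
      have hmem : (L - 1) ∈ {c : ℝ | ∀ v : Fin 0 → ℝ,
          v ⬝ᵥ (H + ((ε * (1 + wbar)) / δ ^ 2) • (Gᵀ * G)).mulVec v ≤ c * (v ⬝ᵥ v)} := by
        intro v; simp [dotProduct]
      linarith [hL.2 hmem]
    · set v : Fin nm → ℝ := fun _ => 1 with hv
      have hvne : v ≠ 0 := by
        intro h
        have := congrFun h ⟨0, hpos⟩
        simp [hv] at this
      have hvv : 0 < v ⬝ᵥ v := dot_self_pos hvne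
      have h1 : σ * (v ⬝ᵥ v) ≤ v ⬝ᵥ H.mulVec v := hσ.1 v
      have h2 : v ⬝ᵥ H.mulVec v ≤ v ⬝ᵥ (H + ((ε * (1 + wbar)) / δ ^ 2) • (Gᵀ * G)).mulVec v := by
        rw [quad_add_GtG]
        have : 0 ≤ (ε * (1 + wbar)) / δ ^ 2 * ∑ i, (G i ⬝ᵥ v)^2 :=
          mul_nonneg hκ0 (Finset.sum_nonneg fun i _ => sq_nonneg _)
        linarith
      have h3 := hL.1 v
      have := (h1.trans h2).trans h3
      exact le_of_mul_le_mul_right this hvv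
  have hL0 : 0 ≤ L := le_trans hσpos.le hLσ
  -- derivative identifications
  have hfderiv : ∀ x : Fin n → ℝ,
      fderiv ℝ (fun U' => Jcost δ ε H F Y G E d w U' x) = Dj δ ε H F G E d w x :=
    fun x => funext fun U => (hasFDerivAt_Jcost hδ hHsymm U).fderiv
  have hfderiv2 : ∀ (x : Fin n → ℝ) (U : Fin nm → ℝ),
      fderiv ℝ (Dj δ ε H F G E d w x) U = D2j δ ε H G E d w x U :=
    fun x U => (hasFDerivAt_Dj hδ U).fderiv
  -- Hessian bounds at level of D2j
  have hlow : ∀ (x : Fin n → ℝ) (U v : Fin nm → ℝ),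
      σ * (v ⬝ᵥ v) ≤ D2j δ ε H G E d w x U v v :=
    fun x U v => (hσ.1 v).trans (D2j_lower hδ hε hw U v)
  have hupp : ∀ (x : Fin n → ℝ) (U v : Fin nm → ℝ),
      D2j δ ε H G E d w x U v v ≤ L * (v ⬝ᵥ v) :=
    fun x U v => (D2j_upper hδ hε hw hwbar U v).trans (hL.1 v)
  refine ⟨hσpos, ?_, ?_, ?_, ?_⟩
  · -- ContDiff 2
    intro x
    rw [show (2 : WithTop ℕ∞) = (1 : WithTop ℕ∞) + 1 from rfl, contDiff_succ_iff_fderiv]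
    refine ⟨fun U => (hasFDerivAt_Jcost hδ hHsymm U).differentiableAt, by simp, ?_⟩
    rw [hfderiv x]
    rw [show (1 : WithTop ℕ∞) = 0 + 1 from rfl, contDiff_succ_iff_fderiv]
    refine ⟨fun U => (hasFDerivAt_Dj hδ U).differentiableAt, by simp, ?_⟩
    rw [contDiff_zero]
    have h : fderiv ℝ (Dj δ ε H F G E d w x) = D2j δ ε H G E d w x := funext (hfderiv2 x)
    rw [h]
    exact continuous_D2j hδ
  · -- Hessian bounds
    intro x U v
    rw [hfderiv x, hfderiv2 x U]
    exact ⟨hlow x U v, hupp x U v⟩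
  · -- strong convexity
    intro x U₁ U₂ t ht0 ht1
    set dvec : Fin nm → ℝ := U₁ - U₂ with hdvec
    set C : ℝ := σ * (dvec ⬝ᵥ dvec) with hC
    set γ : ℝ → (Fin nm → ℝ) := fun s => U₂ + s • dvec with hγdef
    have hγ : ∀ s : ℝ, HasDerivAt γ dvec s := by
      intro s
      have := ((hasDerivAt_id s).smul_const dvec).const_add U₂
      simpa [hγdef] using this
    have hγ1 : γ 1 = U₁ := by funext i; simp [hγdef, hdvec]
    have hγ0 : γ 0 = U₂ := by funext i; simp [hγdef]
    have h1 : ∀ s : ℝ, HasDerivAt (fun s => Jcost δ ε H F Y G E d w (γ s) x)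
        (Dj δ ε H F G E d w x (γ s) dvec) s := by
      intro s
      exact (hasFDerivAt_Jcost hδ hHsymm (γ s)).comp_hasDerivAt s (hγ s)
    set g : ℝ → ℝ := fun s => Jcost δ ε H F Y G E d w (γ s) x - C/2 * s^2 with hgdef
    have hg' : ∀ s : ℝ, HasDerivAt g (Dj δ ε H F G E d w x (γ s) dvec - C * s) s := by
      intro s
      refine (h1 s).sub ?_
      have := (hasDerivAt_pow 2 s).const_mul (C/2)
      rw [show C * s = C / 2 * (((2:ℕ):ℝ) * s ^ (2 - 1)) by rw [show (2:ℕ) - 1 = 1 from rfl]; push_cast; ring]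
      exact this
    have hφ : ∀ s : ℝ, HasDerivAt (fun s => Dj δ ε H F G E d w x (γ s) dvec)
        (D2j δ ε H G E d w x (γ s) dvec dvec) s := by
      intro s
      have hD : HasDerivAt (fun s => Dj δ ε H F G E d w x (γ s))
          (D2j δ ε H G E d w x (γ s) dvec) s :=
        (hasFDerivAt_Dj hδ (γ s)).comp_hasDerivAt s (hγ s)
      have := hD.clm_apply (hasDerivAt_const s dvec)
      simpa using this
    have hderg : deriv g = fun s => Dj δ ε H F G E d w x (γ s) dvec - C * s :=
      funext fun s => (hg' s).deriv
    have hg'' : ∀ s : ℝ, HasDerivAt (deriv g) (D2j δ ε H G E d w x (γ s) dvec dvec - C) s := by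
      intro s
      rw [hderg]
      refine (hφ s).sub ?_
      simpa using (hasDerivAt_id s).const_mul C
    have hconv : ConvexOn ℝ Set.univ g := by
      refine convexOn_of_deriv2_nonneg convex_univ ?_ ?_ ?_ ?_
      · have hdg : Differentiable ℝ g := fun s => (hg' s).differentiableAt
        exact hdg.continuous.continuousOn
      · rw [interior_univ]
        exact fun s _ => (hg' s).differentiableAt.differentiableWithinAt
      · rw [interior_univ]
        exact fun s _ => (hg'' s).differentiableAt.differentiableWithinAt
      · rw [interior_univ]
        intro s _
        have hiter : deriv^[2] g s = deriv (deriv g) s := by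
          simp [Function.iterate_succ, Function.iterate_zero, Function.comp]
        rw [hiter, (hg'' s).deriv]
        have := hlow x (γ s) dvec
        rw [← hC] at this
        linarith
    have key := hconv.2 (Set.mem_univ (1:ℝ)) (Set.mem_univ (0:ℝ)) ht0
      (by linarith : (0:ℝ) ≤ 1 - t) (by ring : t + (1 - t) = 1)
    simp only [smul_eq_mul, mul_one, mul_zero, add_zero] at key
    -- key : g t ≤ t * g 1 + (1 - t) * g 0
    have e2 : g 1 = Jcost δ ε H F Y G E d w U₁ x - C/2 := by
      rw [hgdef]; simp [hγ1]
    have e3 : g 0 = Jcost δ ε H F Y G E d w U₂ x := by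
      rw [hgdef]; simp [hγ0]
    have e1 : g t = Jcost δ ε H F Y G E d w (γ t) x - C/2 * t^2 := rfl
    rw [e1, e2, e3] at key
    have hvec : t • U₁ + (1 - t) • U₂ = γ t := by
      funext i
      simp [hγdef, hdvec, Pi.smul_apply, smul_eq_mul]
      ring
    rw [hvec, hC] at *
    nlinarith [key]
  · -- Lipschitz gradient
    intro x U₁ U₂
    set f : (Fin nm → ℝ) → ℝ := fun U' => Jcost δ ε H F Y G E d w U' x with hfdef
    set z : Fin nm → ℝ := gradVec f U₁ - gradVec f U₂ with hz
    set dvec : Fin nm → ℝ := U₁ - U₂ with hdvec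
    set γ : ℝ → (Fin nm → ℝ) := fun s => U₂ + s • dvec with hγdef
    have hγ : ∀ s : ℝ, HasDerivAt γ dvec s := by
      intro s
      have := ((hasDerivAt_id s).smul_const dvec).const_add U₂
      simpa [hγdef] using this
    have hγ1 : γ 1 = U₁ := by funext i; simp [hγdef, hdvec]
    have hγ0 : γ 0 = U₂ := by funext i; simp [hγdef]
    have hzi : ∀ i, z i = Dj δ ε H F G E d w x U₁ (Pi.single i 1)
        - Dj δ ε H F G E d w x U₂ (Pi.single i 1) := by
      intro i
      rw [hz]
      simp only [Pi.sub_apply, gradVec, hfdef, hfderiv x]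
    have hφ : ∀ s : ℝ, HasDerivAt (fun s => Dj δ ε H F G E d w x (γ s) z)
        (D2j δ ε H G E d w x (γ s) dvec z) s := by
      intro s
      have hD : HasDerivAt (fun s => Dj δ ε H F G E d w x (γ s))
          (D2j δ ε H G E d w x (γ s) dvec) s :=
        (hasFDerivAt_Dj hδ (γ s)).comp_hasDerivAt s (hγ s)
      have := hD.clm_apply (hasDerivAt_const s z)
      simpa using this
    obtain ⟨ξ, hξ, hslope⟩ := exists_hasDerivAt_eq_slope
      (fun s => Dj δ ε H F G E d w x (γ s) z)
      (fun s => D2j δ ε H G E d w x (γ s) dvec z) one_pos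
      ((show Differentiable ℝ _ from fun s => (hφ s).differentiableAt).continuous.continuousOn)
      (fun s _ => hφ s)
    rw [hγ1, hγ0] at hslope
    simp only [sub_zero, div_one] at hslope
    -- hslope : D2j (γ ξ) dvec z = Dj U₁ z - Dj U₂ z
    have hzz : Dj δ ε H F G E d w x U₁ z - Dj δ ε H F G E d w x U₂ z = z ⬝ᵥ z := by
      rw [← clm_sum_single (Dj δ ε H F G E d w x U₁) z,
          ← clm_sum_single (Dj δ ε H F G E d w x U₂) z,
          ← Finset.sum_sub_distrib]
      refine Finset.sum_congr rfl fun i _ => ?_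
      rw [← mul_sub, ← hzi i]
    have hQ := hslope.symm ▸ hzz  -- not used; recompute below
    have hmain : z ⬝ᵥ z = D2j δ ε H G E d w x (γ ξ) dvec z := by
      rw [hslope, hzz]
    -- Cauchy-Schwarz for the Hessian form
    have hQnn : ∀ u : Fin nm → ℝ, 0 ≤ D2j δ ε H G E d w x (γ ξ) u u := fun u =>
      le_trans (mul_nonneg hσpos.le (dot_self_nonneg' u)) (hlow x (γ ξ) u)
    have hCS : ∀ u u' : Fin nm → ℝ,
        (D2j δ ε H G E d w x (γ ξ) u u')^2 ≤
          (D2j δ ε H G E d w x (γ ξ) u u) * (D2j δ ε H G E d w x (γ ξ) u' u') := by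
      intro u u'
      set Q := D2j δ ε H G E d w x (γ ξ) with hQdef
      have hsym : Q u' u = Q u u' := D2j_symm hδ hHsymm (γ ξ) u' u
      have hpoly : ∀ r : ℝ, 0 ≤ (Q u' u') * (r*r) + (2 * (Q u u')) * r + Q u u := by
        intro r
        have h0 := hQnn (u + r • u')
        have hexp : Q (u + r • u') (u + r • u')
            = Q u u + r * (Q u u') + r * (Q u' u) + (r*r) * (Q u' u') := by
          simp only [map_add, _root_.map_smul, ContinuousLinearMap.add_apply,
            ContinuousLinearMap.smul_apply, smul_eq_mul]
          ring
        rw [hexp, hsym] at h0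
        linarith
      have hdisc := discrim_le_zero hpoly
      rw [discrim] at hdisc
      nlinarith [hdisc]
    have hQdd : D2j δ ε H G E d w x (γ ξ) dvec dvec ≤ L * (dvec ⬝ᵥ dvec) := hupp x (γ ξ) dvec
    have hQzz : D2j δ ε H G E d w x (γ ξ) z z ≤ L * (z ⬝ᵥ z) := hupp x (γ ξ) z
    have hkey : (z ⬝ᵥ z)^2 ≤ (L * (dvec ⬝ᵥ dvec)) * (L * (z ⬝ᵥ z)) := by
      calc (z ⬝ᵥ z)^2 = (D2j δ ε H G E d w x (γ ξ) dvec z)^2 := by rw [hmain]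
        _ ≤ (D2j δ ε H G E d w x (γ ξ) dvec dvec) * (D2j δ ε H G E d w x (γ ξ) z z) :=
            hCS dvec z
        _ ≤ (L * (dvec ⬝ᵥ dvec)) * (L * (z ⬝ᵥ z)) := by
            have h1 := hQnn dvec
            have h2 := hQnn z
            have h3 : 0 ≤ L * (dvec ⬝ᵥ dvec) := mul_nonneg hL0 (dot_self_nonneg' dvec)
            nlinarith [hQdd, hQzz]
    -- translate to euclNorm
    have hnorm : ∀ u : Fin nm → ℝ, euclNorm u = Real.sqrt (u ⬝ᵥ u) := by
      intro u
      rw [euclNorm]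
      congr 1
      exact Finset.sum_congr rfl fun i _ => (sq (u i)) ▸ rfl
    rw [hnorm, hnorm]
    set N : ℝ := z ⬝ᵥ z with hN
    set M : ℝ := dvec ⬝ᵥ dvec with hM
    have hN0 : 0 ≤ N := dot_self_nonneg' z
    have hM0 : 0 ≤ M := dot_self_nonneg' dvec
    rcases hN0.lt_or_eq with hNpos | hNzero
    · have hNM : N ≤ L^2 * M := by nlinarith [hkey]
      calc Real.sqrt N ≤ Real.sqrt (L^2 * M) := Real.sqrt_le_sqrt hNM
        _ = L * Real.sqrt M := by
            rw [show L^2 * M = (L * Real.sqrt M)^2 by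
              rw [mul_pow, Real.sq_sqrt hM0]]
            exact Real.sqrt_sq (mul_nonneg hL0 (Real.sqrt_nonneg M))
    · rw [← hNzero, Real.sqrt_zero]
      exact mul_nonneg hL0 (Real.sqrt_nonneg M)
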